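/- The KMP invariant: after processing the prefix Q[1..k] of the text, the state s of the KMP automaton simulation equals the length of the longest prefix of P that is a suffix of Q[1..k]. Consequently, position k is the endpoint of an occurrence of P in Q if and only if the simulation traverses the accepting transition (reaching state m) at step k. -/

import Mathlib

/-- The KMP failure function. -/
def kmpFail {α : Type*} [DecidableEq α] (P : List α) (s : ℕ) : ℕ :=
  Nat.findGreatest (fun k => (P.take k) <:+ (P.take s)) (s - 1)

lemma kmpFail_lt {α : Type*} [DecidableEq α] (P : List α) {s : ℕ} (h : s ≠ 0) :
    kmpFail P s < s := by
  have h1 : kmpFail P s ≤ s - 1 := Nat.findGreatest_le _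
  omega

/-- One transition of the KMP automaton from state `s` on character `c`: if
`c` matches the forward label `P[s+1]` go to `s + 1`, otherwise recursively
follow failure transitions (going to `0` if no state with a matching forward
label is found). -/
def kmpStep {α : Type*} [DecidableEq α] (P : List α) (s : ℕ) (c : α) : ℕ :=
  if P[s]? = some c then s + 1
  else if h : s = 0 then 0
  else kmpStep P (kmpFail P s) c
termination_by s
decreasing_by exact kmpFail_lt P h

/-- The state of the KMP simulation after processing a text `Q` from state `0`. -/
def kmpRun {α : Type*} [DecidableEq α] (P Q : List α) : ℕ :=
  Q.foldl (kmpStep P) 0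

lemma suffix_of_suffix_length_le {α : Type*} {l₁ l₂ l : List α}
    (h1 : l₁ <:+ l) (h2 : l₂ <:+ l) (h : l₁.length ≤ l₂.length) : l₁ <:+ l₂ := by
  rw [← List.reverse_prefix] at h1 h2 ⊢
  exact List.prefix_of_prefix_length_le h1 h2 (by simpa using h)

lemma kmpFail_suffix {α : Type*} [DecidableEq α] (P : List α) (s : ℕ) :
    P.take (kmpFail P s) <:+ P.take s :=
  Nat.findGreatest_spec (P := fun k => (P.take k) <:+ (P.take s)) (Nat.zero_le _)
    (by simp)

lemma kmpStep_spec {α : Type*} [DecidableEq α] (P : List α) (c : α) :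
    ∀ s, s ≤ P.length →
      kmpStep P s c ≤ P.length ∧
      (kmpStep P s c ≠ 0 →
        (P.take (kmpStep P s c - 1)) <:+ P.take s ∧ P[kmpStep P s c - 1]? = some c) ∧
      (∀ j, j ≠ 0 → (P.take (j-1)) <:+ P.take s → P[j-1]? = some c →
        j ≤ kmpStep P s c) := by
  intro s
  induction s using Nat.strong_induction_on with
  | _ s ih =>
    intro hs
    rw [kmpStep]
    by_cases hc : P[s]? = some c
    · simp only [hc, if_pos rfl, if_true]
      have hslt : s < P.length := List.getElem?_eq_some_iff.mp hc |>.1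
      refine ⟨hslt, fun _ => ⟨by simp, by simpa using hc⟩, ?_⟩
      intro j hj hsuf hget
      have hjm : j - 1 < P.length := List.getElem?_eq_some_iff.mp hget |>.1
      have := hsuf.length_le
      simp [List.length_take] at this
      omega
    · rw [if_neg hc]
      by_cases h0 : s = 0
      · rw [dif_pos h0]
        refine ⟨Nat.zero_le _, fun h => absurd rfl h, ?_⟩
        intro j hj hsuf hget
        have hjm : j - 1 < P.length := List.getElem?_eq_some_iff.mp hget |>.1
        have hle := hsuf.length_le
        rw [List.length_take, List.length_take, h0] at hle
        have hj1 : j = 1 := by omega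
        rw [h0] at hc
        exact absurd (by simpa [hj1] using hget) hc
      · rw [dif_neg h0]
        have hfl : kmpFail P s < s := kmpFail_lt P h0
        obtain ⟨ha, hb, hcmax⟩ := ih (kmpFail P s) hfl (by omega)
        have hfs : P.take (kmpFail P s) <:+ P.take s := kmpFail_suffix P s
        refine ⟨ha, fun h => ⟨((hb h).1).trans hfs, (hb h).2⟩, ?_⟩
        intro j hj hsuf hget
        have hjm : j - 1 < P.length := List.getElem?_eq_some_iff.mp hget |>.1
        have hlen := hsuf.length_le
        simp [List.length_take] at hlen
        have hjs : j - 1 ≤ s := by omega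
        have hjne : j - 1 ≠ s := by
          intro h; rw [h] at hget; exact hc hget
        have hle : j - 1 ≤ kmpFail P s :=
          Nat.le_findGreatest (by omega) hsuf
        refine hcmax j hj ?_ hget
        exact suffix_of_suffix_length_le hsuf hfs
          (by simp [List.length_take]; omega)

lemma kmpRun_append_singleton {α : Type*} [DecidableEq α] (P T : List α) (c : α) :
    kmpRun P (T ++ [c]) = kmpStep P (kmpRun P T) c := by
  simp [kmpRun, List.foldl_append]

lemma kmpRun_inv {α : Type*} [DecidableEq α] (P T : List α) :
    kmpRun P T ≤ P.length ∧ (P.take (kmpRun P T)) <:+ T ∧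
      ∀ j ≤ P.length, (P.take j) <:+ T → j ≤ kmpRun P T := by
  induction T using List.reverseRecOn with
  | nil =>
    refine ⟨by simp [kmpRun], by simp [kmpRun], ?_⟩
    intro j hj hsuf
    have := hsuf.length_le
    rw [List.length_take, List.length_nil] at this
    simp only [kmpRun, List.foldl_nil]
    omega
  | append_singleton T c ih =>
    obtain ⟨hs, hsuf, hmax⟩ := ih
    rw [kmpRun_append_singleton]
    set s := kmpRun P T with hsdef
    obtain ⟨ha, hb, hc⟩ := kmpStep_spec P c s hs
    refine ⟨ha, ?_, ?_⟩
    · by_cases hr : kmpStep P s c = 0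
      · simp [hr]
      · obtain ⟨hb1, hb2⟩ := hb hr
        have hst : P.take (kmpStep P s c - 1) <:+ T := hb1.trans hsuf
        have htake : P.take (kmpStep P s c) = P.take (kmpStep P s c - 1) ++ [c] := by
          have he : kmpStep P s c = (kmpStep P s c - 1) + 1 := by omega
          conv_lhs => rw [he]
          rw [List.take_succ, hb2]
          rfl
        rw [htake]
        obtain ⟨t, ht⟩ := hst
        exact ⟨t, by rw [← List.append_assoc, ht]⟩
    · intro j hjm hjsuf
      by_cases hj0 : j = 0
      · omega
      · have hjm' : j - 1 < P.length := by omega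
        obtain ⟨x, hget⟩ : ∃ x, P[j - 1]? = some x := ⟨_, List.getElem?_eq_getElem hjm'⟩
        have htake : P.take j = P.take (j - 1) ++ [x] := by
          have hge := hget
          have hje : j = (j - 1) + 1 := by omega
          conv_lhs => rw [hje]
          rw [List.take_succ, hge]
          rfl
        obtain ⟨t, ht⟩ := hjsuf
        rw [htake, ← List.append_assoc] at ht
        obtain ⟨ht1, ht2⟩ := List.append_inj' ht rfl
        have hcc : x = c := by simpa using ht2
        have hjT : P.take (j - 1) <:+ T := ⟨t, ht1⟩
        have hjs : j - 1 ≤ s := hmax (j - 1) (by omega) hjT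
        have hjss : P.take (j - 1) <:+ P.take s :=
          suffix_of_suffix_length_le hjT hsuf (by simp [List.length_take]; omega)
        exact hc j hj0 hjss (by rw [hget, hcc])

/-- The KMP invariant: after processing the prefix `Q[1..k]`, the state of the
simulation is the length of the longest prefix of `P` that is a suffix of
`Q[1..k]`; consequently `k` is the endpoint of an occurrence of `P` in `Q` iff
the simulation is in the accepting state `m` after step `k`. -/
theorem kmp_invariant {α : Type*} [DecidableEq α] (P Q : List α) (k : ℕ)
    (hk : k ≤ Q.length) :
    (kmpRun P (Q.take k) ≤ P.length ∧
      (P.take (kmpRun P (Q.take k))) <:+ (Q.take k) ∧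
      ∀ j ≤ P.length, (P.take j) <:+ (Q.take k) → j ≤ kmpRun P (Q.take k)) ∧
    (P <:+ Q.take k ↔ kmpRun P (Q.take k) = P.length) := by
  obtain ⟨h1, h2, h3⟩ := kmpRun_inv P (Q.take k)
  refine ⟨⟨h1, h2, h3⟩, ?_, ?_⟩
  · intro h
    have := h3 P.length le_rfl (by simpa [List.take_length] using h)
    omega
  · intro h
    rw [h, List.take_length] at h2
    exact h2
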